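/- Let q ≥ 1 be an integer and let P = (v_1, …, v_{2q+1}) be a path. Suppose each vertex v_i is assigned a finite list L_{v_i} of colors such that |L_{v_1}| ≥ q+1, |L_{v_{2q+1}}| ≥ q+1, and |L_{v_i}| ≥ 2q+1 for every 2 ≤ i ≤ 2q. Then each vertex v_i of P can be assigned a subset S_i ⊆ L_{v_i} with |S_i| = q such that adjacent vertices of the path receive disjoint sets, i.e., S_i ∩ S_{i+1} = ∅ for all 1 ≤ i ≤ 2q. -/

import Mathlib

/- Auxiliary definitions for the backward "avoid-set" recursion.

`Bseq q M t` is the set that the color-set chosen at path vertex `2q-1-t`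
should mostly avoid, and `kseq q M t` is the allowed number of violations. -/

def Bseq {α : Type*} [DecidableEq α] (q : ℕ) (M : ℕ → Finset α) : ℕ → Finset α
  | 0 => M (2 * q - 1) ∩ M (2 * q)
  | t + 1 => M (2 * q - 2 - t) ∩ (M (2 * q - 1 - t) \ Bseq q M t)

def kseq {α : Type*} [DecidableEq α] (q : ℕ) (M : ℕ → Finset α) : ℕ → ℤ
  | 0 => 1
  | t + 1 => kseq q M t + (q + 1) - ((Bseq q M t).card : ℤ)

lemma Bseq_subset {α : Type*} [DecidableEq α] (q : ℕ) (hq : 1 ≤ q) (M : ℕ → Finset α)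
    (t : ℕ) : Bseq q M t ⊆ M (2 * q - 1 - t) := by
  cases t with
  | zero => simpa [Bseq] using Finset.inter_subset_left
  | succ s =>
      have h : 2 * q - 1 - (s + 1) = 2 * q - 2 - s := by omega
      rw [h, Bseq]
      exact Finset.inter_subset_left

/-- Key cardinality bound on two consecutive avoid-sets. -/
lemma Bseq_pair_card {α : Type*} [DecidableEq α] (q : ℕ) (hq : 1 ≤ q) (M : ℕ → Finset α)
    (hMi : ∀ i, 1 ≤ i → i ≤ 2 * q - 1 → (M i).card = 2 * q + 1)
    (t : ℕ) (ht : t ≤ 2 * q - 2) :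
    (Bseq q M t).card + (Bseq q M (t + 1)).card ≤ 2 * q + 1 := by
  have hBt : Bseq q M t ⊆ M (2 * q - 1 - t) := Bseq_subset q hq M t
  have hBt1 : Bseq q M (t + 1) ⊆ M (2 * q - 1 - t) \ Bseq q M t := by
    rw [Bseq]; exact Finset.inter_subset_right
  have hdisj : Disjoint (Bseq q M t) (Bseq q M (t + 1)) := by
    refine Finset.disjoint_left.2 ?_
    intro a ha ha1
    exact ((Finset.mem_sdiff.1 (hBt1 ha1)).2) ha
  have hsub : Bseq q M t ∪ Bseq q M (t + 1) ⊆ M (2 * q - 1 - t) := by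
    refine Finset.union_subset hBt ?_
    exact hBt1.trans (Finset.sdiff_subset)
  have hcard : (Bseq q M t ∪ Bseq q M (t + 1)).card ≤ (M (2 * q - 1 - t)).card :=
    Finset.card_le_card hsub
  rw [Finset.card_union_of_disjoint hdisj] at hcard
  have hM : (M (2 * q - 1 - t)).card = 2 * q + 1 := hMi _ (by omega) (by omega)
  omega

/-- The allowance `kseq` grows: `kseq q M t ≥ 1 + t/2` for `t ≤ 2q-1`. -/
lemma kseq_ge {α : Type*} [DecidableEq α] (q : ℕ) (hq : 1 ≤ q) (M : ℕ → Finset α)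
    (hMi : ∀ i, 1 ≤ i → i ≤ 2 * q - 1 → (M i).card = 2 * q + 1)
    (hMe : (M (2 * q)).card = q + 1) :
    ∀ t, t ≤ 2 * q - 1 → (1 + (t / 2 : ℕ) : ℤ) ≤ kseq q M t := by
  intro t
  induction t using Nat.strong_induction_on with
  | _ t ih =>
    match t with
    | 0 => intro _; simp [kseq]
    | 1 =>
        intro _
        have hB0 : (Bseq q M 0).card ≤ q + 1 := by
          have : Bseq q M 0 ⊆ M (2 * q) := by
            rw [Bseq]; exact Finset.inter_subset_right
          have := Finset.card_le_card this
          omega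
        show (1 + ((1 : ℕ) / 2 : ℕ) : ℤ) ≤ kseq q M 0 + (q + 1) - ((Bseq q M 0).card : ℤ)
        simp only [kseq]
        push_cast
        omega
    | (r + 2) =>
        intro hr
        have hpair : (Bseq q M r).card + (Bseq q M (r + 1)).card ≤ 2 * q + 1 :=
          Bseq_pair_card q hq M hMi r (by omega)
        have hihr : (1 + (r / 2 : ℕ) : ℤ) ≤ kseq q M r := ih r (by omega) (by omega)
        have hk2 : kseq q M (r + 2)
            = kseq q M r + (q + 1) - ((Bseq q M r).card : ℤ)
              + (q + 1) - ((Bseq q M (r + 1)).card : ℤ) := by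
          simp [kseq]
        have hdiv : ((r + 2) / 2 : ℕ) = (r / 2 : ℕ) + 1 := by omega
        rw [hk2, hdiv]
        push_cast
        push_cast at hihr
        omega

/-- Forward construction of the partial chains along the path. -/
lemma forward {α : Type*} [DecidableEq α] (q : ℕ) (hq : 1 ≤ q) (M : ℕ → Finset α)
    (hM0 : (M 0).card = q + 1)
    (hMi : ∀ i, 1 ≤ i → i ≤ 2 * q - 1 → (M i).card = 2 * q + 1)
    (hMe : (M (2 * q)).card = q + 1) :
    ∀ j, j ≤ 2 * q - 1 → ∃ S : ℕ → Finset α,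
      (∀ i, i ≤ j → S i ⊆ M i ∧ (S i).card = q) ∧
      (∀ i, i < j → Disjoint (S i) (S (i + 1))) ∧
      (((S j ∩ Bseq q M (2 * q - 1 - j)).card : ℤ) ≤ kseq q M (2 * q - 1 - j)) := by
  intro j
  induction j with
  | zero =>
      intro _
      obtain ⟨S0, hS0sub, hS0card⟩ := Finset.exists_subset_card_eq (s := M 0) (n := q) (by omega)
      refine ⟨fun _ => S0, ?_, ?_, ?_⟩
      · intro i hi
        interval_cases i
        exact ⟨hS0sub, hS0card⟩
      · intro i hi; omega
      · have h1 : ((S0 ∩ Bseq q M (2 * q - 1 - 0)).card : ℤ) ≤ (q : ℤ) := by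
          have hle : (S0 ∩ Bseq q M (2 * q - 1 - 0)).card ≤ S0.card :=
            Finset.card_le_card Finset.inter_subset_left
          rw [hS0card] at hle
          exact_mod_cast hle
        have h2 : (q : ℤ) ≤ kseq q M (2 * q - 1 - 0) := by
          have := kseq_ge q hq M hMi hMe (2 * q - 1) (le_refl _)
          have hdiv : ((2 * q - 1) / 2 : ℕ) = q - 1 := by omega
          rw [hdiv] at this
          simp only [Nat.sub_zero]
          push_cast at this ⊢
          omega
        exact h1.trans h2
  | succ j IH =>
      intro hj1
      obtain ⟨S, hSprop, hSdisj, hSbound⟩ := IH (by omega)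
      set t := 2 * q - 2 - j with ht_def
      have hjt : 2 * q - 1 - j = t + 1 := by omega
      have hjt1 : 2 * q - 1 - (j + 1) = t := by omega
      rw [hjt] at hSbound
      -- key identity for Bseq (t+1)
      have hBid : Bseq q M (t + 1) = M j ∩ (M (j + 1) \ Bseq q M t) := by
        rw [Bseq]
        have e1 : 2 * q - 2 - t = j := by omega
        have e2 : 2 * q - 1 - t = j + 1 := by omega
        rw [e1, e2]
      obtain ⟨hSpsub, hSpcard⟩ := hSprop j (le_refl _)
      have hBt_sub : Bseq q M t ⊆ M (j + 1) := by
        have := Bseq_subset q hq M t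
        have e2 : 2 * q - 1 - t = j + 1 := by omega
        rwa [e2] at this
      have hMj1 : (M (j + 1)).card = 2 * q + 1 := hMi _ (by omega) (by omega)
      -- the set of "clean" available colors
      set X := (M (j + 1) \ Bseq q M t) \ S j with hX_def
      have hXcard : ((2 * q + 1 : ℤ) - ((Bseq q M t).card : ℤ)
          - ((S j ∩ Bseq q M (t + 1)).card : ℤ)) ≤ (X.card : ℤ) := by
        have hBcard_le : (Bseq q M t).card ≤ 2 * q + 1 := by
          have := Finset.card_le_card hBt_sub
          omega
        have hsd : (M (j + 1) \ Bseq q M t).card + (Bseq q M t).card = 2 * q + 1 := by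
          rw [Finset.card_sdiff_of_subset hBt_sub, hMj1]
          omega
        have hint : (M (j + 1) \ Bseq q M t) ∩ S j = S j ∩ Bseq q M (t + 1) := by
          rw [Finset.inter_comm, hBid, ← Finset.inter_assoc,
            Finset.inter_eq_left.2 hSpsub]
        have hsplit : X.card + (S j ∩ Bseq q M (t + 1)).card
            = (M (j + 1) \ Bseq q M t).card := by
          rw [hX_def, ← hint]
          exact Finset.card_sdiff_add_card_inter _ _
        push_cast
        omega
      have hkt_pos : (1 : ℤ) ≤ kseq q M t := by
        have h := kseq_ge q hq M hMi hMe t (by omega)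
        omega
      have hkrec : kseq q M (t + 1) = kseq q M t + (q + 1) - ((Bseq q M t).card : ℤ) := by
        simp [kseq]
      -- X is large:  (X.card : ℤ) ≥ q - kseq t
      have hXbig : (q : ℤ) - kseq q M t ≤ (X.card : ℤ) := by
        have := hSbound
        rw [hkrec] at this
        omega
      -- choose the new set
      set kn := (kseq q M t).toNat with hkn_def
      have hkn : (kn : ℤ) = kseq q M t := Int.toNat_of_nonneg (by omega)
      set m := q - kn with hm_def
      have hmX : m ≤ X.card := by
        rcases le_or_gt q kn with h | h
        · have : m = 0 := by omega
          omega
        · have : (m : ℤ) = (q : ℤ) - kseq q M t := by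
            rw [← hkn]; push_cast; omega
          have h2 : (m : ℤ) ≤ (X.card : ℤ) := by rw [this]; exact hXbig
          exact_mod_cast h2
      obtain ⟨X', hX'sub, hX'card⟩ := Finset.exists_subset_card_eq (s := X) (n := m) hmX
      have hYbase : q + 1 - m ≤ ((M (j + 1) \ S j) \ X').card := by
        have h1 : (M (j + 1)).card - (S j).card ≤ (M (j + 1) \ S j).card :=
          Finset.le_card_sdiff _ _
        have h2 : (M (j + 1) \ S j).card - X'.card ≤ ((M (j + 1) \ S j) \ X').card :=
          Finset.le_card_sdiff _ _
        omega
      obtain ⟨Y', hY'sub, hY'card⟩ :=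
        Finset.exists_subset_card_eq (s := (M (j + 1) \ S j) \ X') (n := q - m) (by omega)
      set Snew := X' ∪ Y' with hSnew_def
      have hX'avail : X' ⊆ M (j + 1) \ S j := by
        refine hX'sub.trans ?_
        intro x hx
        rw [hX_def] at hx
        have h1 := Finset.mem_sdiff.1 hx
        have h2 := Finset.mem_sdiff.1 h1.1
        exact Finset.mem_sdiff.2 ⟨h2.1, h1.2⟩
      have hSnew_sub : Snew ⊆ M (j + 1) \ S j := by
        refine Finset.union_subset hX'avail ?_
        exact hY'sub.trans Finset.sdiff_subset
      have hXY : Disjoint X' Y' := by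
        refine Finset.disjoint_left.2 ?_
        intro a ha haY
        exact (Finset.mem_sdiff.1 (hY'sub haY)).2 ha
      have hSnew_card : Snew.card = q := by
        rw [hSnew_def, Finset.card_union_of_disjoint hXY, hX'card, hY'card]
        omega
      have hSnew_disj : Disjoint (S j) Snew := by
        refine Finset.disjoint_left.2 ?_
        intro a ha haS
        exact (Finset.mem_sdiff.1 (hSnew_sub haS)).2 ha
      have hSnew_bound : ((Snew ∩ Bseq q M t).card : ℤ) ≤ kseq q M t := by
        have hsubY : Snew ∩ Bseq q M t ⊆ Y' := by
          intro a ha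
          obtain ⟨haS, haB⟩ := Finset.mem_inter.1 ha
          rcases Finset.mem_union.1 haS with h | h
          · exfalso
            have := hX'sub h
            rw [hX_def] at this
            exact (Finset.mem_sdiff.1 (Finset.mem_sdiff.1 this).1).2 haB
          · exact h
        have h1 : (Snew ∩ Bseq q M t).card ≤ q - m := by
          have := Finset.card_le_card hsubY
          omega
        have h2 : (q - m : ℕ) ≤ kn := by omega
        have : ((Snew ∩ Bseq q M t).card : ℤ) ≤ (kn : ℤ) := by exact_mod_cast h1.trans h2
        omega
      refine ⟨Function.update S (j + 1) Snew, ?_, ?_, ?_⟩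
      · intro i hi
        rcases Nat.lt_or_ge i (j + 1) with h | h
        · rw [Function.update_of_ne (by omega)]
          exact hSprop i (by omega)
        · have : i = j + 1 := by omega
          subst this
          rw [Function.update_self]
          exact ⟨hSnew_sub.trans Finset.sdiff_subset, hSnew_card⟩
      · intro i hi
        rcases Nat.lt_or_ge i j with h | h
        · rw [Function.update_of_ne (by omega), Function.update_of_ne (by omega)]
          exact hSdisj i h
        · have : i = j := by omega
          subst this
          rw [Function.update_of_ne (by omega), Function.update_self]
          exact hSnew_disj
      · rw [hjt1, Function.update_self]
        exact hSnew_bound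

theorem path_list_multicoloring {α : Type*} [DecidableEq α] (q : ℕ) (hq : 1 ≤ q)
    (L : Fin (2 * q + 1) → Finset α)
    (hfirst : q + 1 ≤ (L 0).card)
    (hlast : q + 1 ≤ (L (Fin.last (2 * q))).card)
    (hinner : ∀ i : Fin (2 * q + 1), 1 ≤ (i : ℕ) → (i : ℕ) ≤ 2 * q - 1 →
      2 * q + 1 ≤ (L i).card) :
    ∃ S : Fin (2 * q + 1) → Finset α,
      (∀ i, S i ⊆ L i ∧ (S i).card = q) ∧
      (∀ i : Fin (2 * q), Disjoint (S i.castSucc) (S i.succ)) := by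
  classical
  -- shrink the lists to exact sizes
  have hex : ∀ i : Fin (2 * q + 1), ∃ T, T ⊆ L i ∧
      T.card = (if (i : ℕ) = 0 ∨ (i : ℕ) = 2 * q then q + 1 else 2 * q + 1) := by
    intro i
    by_cases h0 : (i : ℕ) = 0 ∨ (i : ℕ) = 2 * q
    · rw [if_pos h0]
      rcases h0 with h0 | h0
      · have hi0 : i = 0 := by
          apply Fin.ext; simpa using h0
        subst hi0
        exact Finset.exists_subset_card_eq hfirst
      · have hi0 : i = Fin.last (2 * q) := by
          apply Fin.ext; simpa [Fin.val_last] using h0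
        subst hi0
        exact Finset.exists_subset_card_eq hlast
    · rw [if_neg h0]
      push_neg at h0
      exact Finset.exists_subset_card_eq
        (hinner i (by omega) (by have := i.isLt; omega))
  choose f hfsub hfcard using hex
  set M : ℕ → Finset α := fun n => if h : n < 2 * q + 1 then f ⟨n, h⟩ else ∅ with hM_def
  have hMsub : ∀ n (h : n < 2 * q + 1), M n ⊆ L ⟨n, h⟩ := by
    intro n h
    simp only [hM_def, dif_pos h]
    exact hfsub _
  have hM0 : (M 0).card = q + 1 := by
    have hlt : (0 : ℕ) < 2 * q + 1 := by omega
    have h := hfcard ⟨0, hlt⟩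
    rw [if_pos (Or.inl rfl)] at h
    simp only [hM_def, dif_pos hlt]
    exact h
  have hMi : ∀ i, 1 ≤ i → i ≤ 2 * q - 1 → (M i).card = 2 * q + 1 := by
    intro i h1 h2
    have hlt : i < 2 * q + 1 := by omega
    have h := hfcard ⟨i, hlt⟩
    rw [if_neg ?_] at h
    · simp only [hM_def, dif_pos hlt]
      exact h
    · show ¬((⟨i, hlt⟩ : Fin (2 * q + 1)).val = 0 ∨ (⟨i, hlt⟩ : Fin (2 * q + 1)).val = 2 * q)
      simp only [Fin.val_mk]
      omega
  have hMe : (M (2 * q)).card = q + 1 := by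
    have hlt : 2 * q < 2 * q + 1 := by omega
    have h := hfcard ⟨2 * q, hlt⟩
    rw [if_pos (Or.inr rfl)] at h
    simp only [hM_def, dif_pos hlt]
    exact h
  obtain ⟨S, hSprop, hSdisj, hSbound⟩ :=
    forward q hq M hM0 hMi hMe (2 * q - 1) (le_refl _)
  have hzero : 2 * q - 1 - (2 * q - 1) = 0 := by omega
  rw [hzero] at hSbound
  have hk0 : kseq q M 0 = 1 := rfl
  rw [hk0] at hSbound
  -- choose the last set
  obtain ⟨hS21sub, hS21card⟩ := hSprop (2 * q - 1) (le_refl _)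
  have hinterB : S (2 * q - 1) ∩ M (2 * q) = S (2 * q - 1) ∩ Bseq q M 0 := by
    show _ = S (2 * q - 1) ∩ (M (2 * q - 1) ∩ M (2 * q))
    rw [← Finset.inter_assoc, Finset.inter_eq_left.2 hS21sub]
  have hlastavail : q ≤ (M (2 * q) \ S (2 * q - 1)).card := by
    have hsplit : (M (2 * q) \ S (2 * q - 1)).card
        + (M (2 * q) ∩ S (2 * q - 1)).card = (M (2 * q)).card :=
      Finset.card_sdiff_add_card_inter _ _
    have hIB : (M (2 * q) ∩ S (2 * q - 1)).card ≤ 1 := by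
      rw [Finset.inter_comm, hinterB]
      exact_mod_cast hSbound
    omega
  obtain ⟨Slast, hSlastsub, hSlastcard⟩ :=
    Finset.exists_subset_card_eq (s := M (2 * q) \ S (2 * q - 1)) (n := q) hlastavail
  set S' := Function.update S (2 * q) Slast with hS'_def
  have hS'prop : ∀ n, n ≤ 2 * q → S' n ⊆ M n ∧ (S' n).card = q := by
    intro n hn
    rcases Nat.lt_or_ge n (2 * q) with h | h
    · rw [hS'_def, Function.update_of_ne (by omega)]
      exact hSprop n (by omega)
    · have : n = 2 * q := by omega
      subst this
      rw [hS'_def, Function.update_self]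
      exact ⟨hSlastsub.trans Finset.sdiff_subset, hSlastcard⟩
  have hS'disj : ∀ n, n < 2 * q → Disjoint (S' n) (S' (n + 1)) := by
    intro n hn
    rcases Nat.lt_or_ge (n + 1) (2 * q) with h | h
    · rw [hS'_def, Function.update_of_ne (by omega), Function.update_of_ne (by omega)]
      exact hSdisj n (by omega)
    · have : n + 1 = 2 * q := by omega
      have hn2 : n = 2 * q - 1 := by omega
      rw [hS'_def, Function.update_of_ne (by omega), this, Function.update_self, hn2]
      refine Finset.disjoint_left.2 ?_
      intro a ha haS
      exact (Finset.mem_sdiff.1 (hSlastsub haS)).2 ha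
  refine ⟨fun i => S' (i : ℕ), ?_, ?_⟩
  · intro i
    obtain ⟨h1, h2⟩ := hS'prop (i : ℕ) (by have := i.isLt; omega)
    refine ⟨?_, h2⟩
    refine h1.trans ?_
    have := hMsub (i : ℕ) i.isLt
    simpa using this
  · intro i
    have h := hS'disj (i : ℕ) i.isLt
    simpa [Fin.coe_castSucc, Fin.val_succ] using h
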